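/- arXiv:1803.06201 — 2 statements merged into one kernel-verified Lean document; each statement's English description precedes it below -/
import Mathlib

section
/- Let X be a compact metric space, f : X → X a continuous map, φ : X → ℝ a continuous function, and x, y ∈ X. If (1/N) ∑_{n=1}^N μ(n) φ(f^n(x)) → 0 as N → ∞ and the pair (x, y) is asymptotic, then (1/N) ∑_{n=1}^N μ(n) φ(f^n(y)) → 0 as N → ∞. -/
open Filter Topology

/-- `S` is an `(n, f, ε)`-separated set. -/
def IsSepSet {X : Type*} [MetricSpace X] (f : X → X) (n : ℕ) (ε : ℝ) (S : Set X) : Prop :=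
  ∀ x ∈ S, ∀ y ∈ S, x ≠ y → ∃ j < n, ε < dist (f^[j] x) (f^[j] y)

/-- `sep (n, f, ε)`: maximal cardinality of an `(n, f, ε)`-separated subset of `X`. -/
noncomputable def sepCount {X : Type*} [MetricSpace X] (f : X → X) (n : ℕ) (ε : ℝ) : ℕ :=
  sSup {k : ℕ | ∃ S : Finset X, IsSepSet f n ε ↑S ∧ S.card = k}

/-- `f` has zero topological entropy:
`lim_{ε→0⁺} limsup_n (1/n) log sep(n, f, ε) = 0`. -/
def ZeroTopEntropy {X : Type*} [MetricSpace X] (f : X → X) : Prop :=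
  Tendsto (fun ε : ℝ => Filter.limsup (fun n : ℕ => Real.log (sepCount f n ε) / n) atTop)
    (𝓝[>] (0 : ℝ)) (𝓝 0)

/-- `A` is an arc with endpoints `a` and `b`. -/
def IsArcWith {X : Type*} [TopologicalSpace X] (A : Set X) (a b : X) : Prop :=
  ∃ h : (Set.Icc (0:ℝ) 1) ≃ₜ A,
    ((h ⟨0, le_rfl, zero_le_one⟩ : A) : X) = a ∧ ((h ⟨1, zero_le_one, le_rfl⟩ : A) : X) = b

/-- `X` is a topological graph: a compact connected metric space which is a union of
finitely many arcs, any two of which meet only in their endpoints. -/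
def IsTopGraph (X : Type*) [MetricSpace X] : Prop :=
  CompactSpace X ∧ ConnectedSpace X ∧
    ∃ (𝒜 : Finset (Set X)) (ep : Set X → X × X),
      (⋃ A ∈ 𝒜, A) = Set.univ ∧
      (∀ A ∈ 𝒜, IsArcWith A (ep A).1 (ep A).2) ∧
      (∀ A ∈ 𝒜, ∀ B ∈ 𝒜, A ≠ B →
        A ∩ B ⊆ ({(ep A).1, (ep A).2} : Set X) ∩ ({(ep B).1, (ep B).2} : Set X))

/-- `X` contains no homeomorphic copy of the circle. -/
def NoCircleCopy (X : Type*) [TopologicalSpace X] : Prop :=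
  ¬ ∃ S : Set X, Nonempty (S ≃ₜ Circle)

/-- `X` is a dendrite: compact, connected, locally connected metric space with
no homeomorphic copy of the circle. -/
def IsDendriteSpace (X : Type*) [TopologicalSpace X] : Prop :=
  CompactSpace X ∧ ConnectedSpace X ∧ LocallyConnectedSpace X ∧ NoCircleCopy X

/-- `X` is a local dendrite: compact connected metric space each point of which
has a neighborhood which is a dendrite. -/
def IsLocalDendriteSpace (X : Type*) [TopologicalSpace X] : Prop :=
  CompactSpace X ∧ ConnectedSpace X ∧ ∀ x : X, ∃ N : Set X, N ∈ 𝓝 x ∧ IsDendriteSpace N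

/-- `f` is monotone: preimages of connected sets are connected. -/
def MonotoneMap {X : Type*} [TopologicalSpace X] (f : X → X) : Prop :=
  ∀ C : Set X, IsPreconnected C → IsPreconnected (f ⁻¹' C)

/-- Möbius disjointness holds at `x` for the observable `φ`. -/
def MobiusAt {X : Type*} [TopologicalSpace X] (f : X → X) (x : X) (φ : X → ℝ) : Prop :=
  Tendsto (fun N : ℕ => (1 / (N : ℝ)) * ∑ n ∈ Finset.Icc 1 N,
    ((ArithmeticFunction.moebius n : ℤ) : ℝ) * φ (f^[n] x)) atTop (𝓝 0)

/-- The ω-limit set of `x` under `f`. -/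
def omegaSet {X : Type*} [TopologicalSpace X] (f : X → X) (x : X) : Set X :=
  {y | ∃ φ : ℕ → ℕ, Tendsto φ atTop atTop ∧ Tendsto (fun i => f^[φ i] x) atTop (𝓝 y)}

/-- `S` is a minimal set of `f`. -/
def IsMinimalSet {X : Type*} [TopologicalSpace X] (f : X → X) (S : Set X) : Prop :=
  S.Nonempty ∧ IsClosed S ∧ f '' S ⊆ S ∧
    ∀ T ⊆ S, T.Nonempty → IsClosed T → f '' T ⊆ T → T = S

set_option maxHeartbeats 1000000 in
/-- Möbius disjointness transfers along asymptotic pairs. -/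
theorem mobius_disjointness_of_asymptotic {X : Type*} [MetricSpace X] [CompactSpace X]
    (f : X → X) (hf : Continuous f) (φ : X → ℝ) (hφ : Continuous φ) (x y : X)
    (hx : MobiusAt f x φ)
    (hasym : Tendsto (fun n : ℕ => dist (f^[n] x) (f^[n] y)) atTop (𝓝 0)) :
    MobiusAt f y φ := by
  classical
  have hφu : UniformContinuous φ := CompactSpace.uniformContinuous_of_continuous hφ
  have h1 : Tendsto (fun n : ℕ => (f^[n] x, f^[n] y)) atTop (uniformity X) := by
    rw [tendsto_uniformity_iff_dist_tendsto_zero]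
    exact hasym
  have h2' : Tendsto (fun n : ℕ => (φ (f^[n] x), φ (f^[n] y))) atTop (uniformity ℝ) :=
    Filter.Tendsto.comp hφu h1
  have h2 : Tendsto (fun n : ℕ => dist (φ (f^[n] x)) (φ (f^[n] y))) atTop (𝓝 0) :=
    tendsto_uniformity_iff_dist_tendsto_zero.mp h2' 
  set g : ℕ → ℝ := fun n => ((ArithmeticFunction.moebius n : ℤ) : ℝ) *
      (φ (f^[n] y) - φ (f^[n] x)) with hg
  have hg0 : Tendsto g atTop (𝓝 0) := by
    apply squeeze_zero_norm _ h2
    intro n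
    rw [hg]
    simp only [norm_mul, Real.dist_eq]
    calc ‖((ArithmeticFunction.moebius n : ℤ) : ℝ)‖ * ‖φ (f^[n] y) - φ (f^[n] x)‖
        ≤ 1 * ‖φ (f^[n] y) - φ (f^[n] x)‖ := by
          apply mul_le_mul_of_nonneg_right _ (norm_nonneg _)
          rw [Real.norm_eq_abs, ← Int.cast_abs]
          have := ArithmeticFunction.abs_moebius_le_one (n := n)
          exact_mod_cast this
      _ = |φ (f^[n] x) - φ (f^[n] y)| := by rw [one_mul, Real.norm_eq_abs, abs_sub_comm]
  have hu : Tendsto (fun i : ℕ => g (i + 1)) atTop (𝓝 0) :=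
    hg0.comp (tendsto_add_atTop_nat 1)
  have hces : Tendsto (fun N : ℕ => ((N : ℝ)⁻¹) * ∑ i ∈ Finset.range N, g (i + 1))
      atTop (𝓝 0) := hu.cesaro
  have hces' : Tendsto (fun N : ℕ => ((N : ℝ)⁻¹) * ∑ n ∈ Finset.Icc 1 N, g n)
      atTop (𝓝 0) := by
    refine hces.congr fun N => ?_
    rw [← Finset.Ico_add_one_right_eq_Icc, Finset.sum_Ico_eq_sum_range]
    simp [add_comm]
  have := hx.add hces'
  rw [add_zero] at this
  refine this.congr fun N => ?_
  simp only [hg, one_div]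
  rw [← mul_add, ← Finset.sum_add_distrib]
  congr 1
  apply Finset.sum_congr rfl
  intro n _
  ring
end

section
/- Let X be a compact metric space and f : X → X a continuous map. Then for each x ∈ X there exists an almost periodic point y ∈ ω_f(x) such that the pair (x, y) is proximal. -/
open Filter Topology

set_option linter.unusedSectionVars false

namespace AEP

variable {X : Type*} [MetricSpace X] [CompactSpace X]

/-- tail sets of the iterate semigroup, closed up, in `X → X` with pointwise topology. -/
def EE (f : X → X) (N : ℕ) : Set (X → X) := closure (Set.range fun n : ℕ => f^[n + N])

lemma isClosed_EE (f : X → X) (N : ℕ) : IsClosed (EE f N) := isClosed_closure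

lemma contR (h : X → X) : Continuous fun g : X → X => g ∘ h :=
  continuous_pi fun z => continuous_apply (h z)

lemma contL {g : X → X} (hg : Continuous g) : Continuous fun h : X → X => g ∘ h :=
  continuous_pi fun z => hg.comp (continuous_apply z)

lemma self_mem_EE (f : X → X) (N : ℕ) {n : ℕ} (hn : N ≤ n) : f^[n] ∈ EE f N := by
  apply subset_closure
  refine ⟨n - N, ?_⟩
  show f^[n - N + N] = f^[n]
  rw [Nat.sub_add_cancel hn]

lemma comp_mem_EE {f : X → X} (hf : Continuous f) {N M : ℕ} {g h : X → X}
    (hg : g ∈ EE f N) (hh : h ∈ EE f M) : g ∘ h ∈ EE f (N + M) := by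
  have step1 : ∀ n : ℕ, N ≤ n → f^[n] ∘ h ∈ EE f (N + M) := by
    intro n hn
    refine map_mem_closure (f := fun h' : X → X => f^[n] ∘ h') (contL (hf.iterate n)) hh ?_
    rintro _ ⟨m, rfl⟩
    show f^[n] ∘ f^[m + M] ∈ Set.range fun k : ℕ => f^[k + (N + M)]
    have harith : (n - N + m) + (N + M) = n + (m + M) := by omega
    refine ⟨(n - N) + m, ?_⟩
    show f^[(n - N + m) + (N + M)] = f^[n] ∘ f^[m + M]
    rw [harith, Function.iterate_add]
  have h4 : (fun g' : X → X => g' ∘ h) g ∈ closure (EE f (N + M)) := by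
    refine map_mem_closure (f := fun g' : X → X => g' ∘ h) (contR h) hg ?_
    rintro _ ⟨k, rfl⟩
    exact step1 (k + N) (Nat.le_add_left N k)
  rwa [(isClosed_EE f (N + M)).closure_eq] at h4

lemma EE_antitone (f : X → X) : Antitone fun N => EE f N := by
  intro N M hNM
  apply closure_mono
  rintro _ ⟨n, rfl⟩
  refine ⟨n + (M - N), ?_⟩
  show f^[n + (M - N) + N] = f^[n + M]
  rw [Nat.add_assoc, Nat.sub_add_cancel hNM]

lemma EE_nonempty (f : X → X) (N : ℕ) : (EE f N).Nonempty :=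
  ⟨f^[N], self_mem_EE f N le_rfl⟩

/-- the kernel `⋂ N, EE f N`. -/
def Einf (f : X → X) : Set (X → X) := ⋂ N, EE f N

lemma Einf_nonempty (f : X → X) : (Einf f).Nonempty := by
  apply IsCompact.nonempty_iInter_of_directed_nonempty_isCompact_isClosed
  · exact (EE_antitone f).directed_ge
  · exact EE_nonempty f
  · exact fun N => (isClosed_EE f N).isCompact
  · exact fun N => isClosed_EE f N

lemma Einf_closed (f : X → X) : IsClosed (Einf f) :=
  isClosed_iInter fun N => isClosed_EE f N

lemma Einf_subset_EE (f : X → X) (N : ℕ) : Einf f ⊆ EE f N :=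
  Set.iInter_subset _ N

lemma comp_mem_Einf {f : X → X} (hf : Continuous f) {g h : X → X}
    (hg : g ∈ EE f 0) (hh : h ∈ Einf f) : g ∘ h ∈ Einf f := by
  refine Set.mem_iInter.2 fun N => ?_
  have := comp_mem_EE hf hg (Set.mem_iInter.1 hh N)
  simpa using this

/-- existence of an idempotent in a compact subsemigroup. -/
lemma exists_idem (L : Set (X → X)) (hne : L.Nonempty) (hcl : IsClosed L)
    (hmul : ∀ g ∈ L, ∀ h ∈ L, g ∘ h ∈ L) : ∃ u ∈ L, u ∘ u = u := by
  haveI : Nonempty L := hne.to_subtype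
  letI : Semigroup L :=
    { mul := fun a b => ⟨a.1 ∘ b.1, hmul _ a.2 _ b.2⟩
      mul_assoc := fun a b c => Subtype.ext rfl }
  haveI : CompactSpace L := isCompact_iff_compactSpace.mp hcl.isCompact
  have cml : ∀ r : L, Continuous (· * r) := fun r =>
    Continuous.subtype_mk ((contR r.1).comp continuous_subtype_val) _
  obtain ⟨u, hu⟩ := exists_idempotent_of_compact_t2_of_continuous_mul_left cml
  exact ⟨u.1, u.2, congrArg Subtype.val hu⟩


/-- A minimal closed left ideal inside the kernel. -/
lemma exists_minimal_LI (f : X → X) (hf : Continuous f) :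
    ∃ L : Set (X → X),
      (L.Nonempty ∧ IsClosed L ∧ L ⊆ Einf f ∧ ∀ g ∈ EE f 0, ∀ l ∈ L, g ∘ l ∈ L) ∧
      ∀ L' : Set (X → X),
        (L'.Nonempty ∧ IsClosed L' ∧ L' ⊆ Einf f ∧ ∀ g ∈ EE f 0, ∀ l ∈ L', g ∘ l ∈ L') →
        L' ⊆ L → L' = L := by
  set S : Set (Set (X → X)) :=
    {L | L.Nonempty ∧ IsClosed L ∧ L ⊆ Einf f ∧ ∀ g ∈ EE f 0, ∀ l ∈ L, g ∘ l ∈ L} with hS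
  have hkey : ∀ c ⊆ S, IsChain (· ⊆ ·) c → c.Nonempty →
      ∃ lb ∈ S, ∀ s ∈ c, lb ⊆ s := by
    intro c hcS hchain hcne
    haveI : Nonempty c := hcne.to_subtype
    have hdir : Directed (· ⊇ ·) (fun L : c => (L : Set (X → X))) := by
      rintro ⟨A, hA⟩ ⟨B, hB⟩
      rcases hchain.total hA hB with h | h
      · exact ⟨⟨A, hA⟩, Set.Subset.rfl, h⟩
      · exact ⟨⟨B, hB⟩, h, Set.Subset.rfl⟩
    have hne : (⋂ L : c, (L : Set (X → X))).Nonempty := by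
      apply IsCompact.nonempty_iInter_of_directed_nonempty_isCompact_isClosed _ hdir
      · exact fun L => (hcS L.2).1
      · exact fun L => (hcS L.2).2.1.isCompact
      · exact fun L => (hcS L.2).2.1
    obtain ⟨L0, hL0⟩ := hcne
    refine ⟨⋂ L : c, (L : Set (X → X)), ⟨hne, isClosed_iInter fun L => (hcS L.2).2.1,
      (Set.iInter_subset (fun L : c => (L : Set (X → X))) ⟨L0, hL0⟩).trans (hcS hL0).2.2.1, ?_⟩,
      fun s hs => Set.iInter_subset (fun L : c => (L : Set (X → X))) ⟨s, hs⟩⟩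
    intro g hg l hl
    exact Set.mem_iInter.2 fun L => (hcS L.2).2.2.2 g hg l (Set.mem_iInter.1 hl L)
  have hEinfS : Einf f ∈ S :=
    ⟨Einf_nonempty f, Einf_closed f, Set.Subset.rfl, fun g hg l hl => comp_mem_Einf hf hg hl⟩
  obtain ⟨L, _, hmin⟩ := zorn_superset_nonempty S hkey (Einf f) hEinfS
  exact ⟨L, hmin.prop, fun L' hL' hsub => Set.Subset.antisymm hsub (hmin.2 hL' hsub)⟩

end AEP


/-- every point is proximal to an almost periodic point of its ω-limit set. -/
theorem exists_almost_periodic_proximal {X : Type*} [MetricSpace X] [CompactSpace X]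
    (f : X → X) (hf : Continuous f) (x : X) :
    ∃ y ∈ omegaSet f x,
      IsMinimalSet f (closure (Set.range fun n : ℕ => f^[n] y)) ∧
      Filter.liminf (fun n : ℕ => dist (f^[n] x) (f^[n] y)) atTop = 0 := by
  classical
  obtain ⟨L, ⟨hLne, hLcl, hLsub, hLid⟩, hLmin⟩ := AEP.exists_minimal_LI f hf
  have hLmul : ∀ g ∈ L, ∀ h ∈ L, g ∘ h ∈ L := fun g hg h hh =>
    hLid g (AEP.Einf_subset_EE f 0 (hLsub hg)) h hh
  obtain ⟨u, huL, huid⟩ := AEP.exists_idem L hLne hLcl hLmul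
  set y := u x with hy
  have huE : ∀ N, u ∈ AEP.EE f N := fun N => Set.mem_iInter.1 (hLsub huL) N
  have huy : u y = y := congrFun huid x
  have hfE : f ∈ AEP.EE f 0 := Function.iterate_one f ▸ AEP.self_mem_EE f 0 (Nat.zero_le 1)
  -- orbit closures as evaluation images
  have horbit : ∀ z : X, ∀ g ∈ AEP.EE f 0, g z ∈ closure (Set.range fun n : ℕ => f^[n] z) := by
    intro z g hg
    refine map_mem_closure (f := fun g : X → X => g z) (continuous_apply z) hg ?_
    rintro _ ⟨n, rfl⟩
    exact ⟨n, rfl⟩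
  -- (a) y is in the closure of every orbit tail of x
  have hyN : ∀ N : ℕ, y ∈ closure (Set.range fun n : ℕ => f^[n + N] x) := by
    intro N
    refine map_mem_closure (f := fun g : X → X => g x) (continuous_apply x) (huE N) ?_
    rintro _ ⟨n, rfl⟩
    exact ⟨n, rfl⟩
  -- (b) y ∈ omegaSet f x
  have hyomega : y ∈ omegaSet f x := by
    have hsel : ∀ k : ℕ, ∃ n : ℕ, k ≤ n ∧ dist (f^[n] x) y < 1 / (k + 1) := by
      intro k
      have hk : (0:ℝ) < 1 / (k + 1) := by positivity
      obtain ⟨b, ⟨n, rfl⟩, hd⟩ := Metric.mem_closure_iff.1 (hyN k) _ hk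
      exact ⟨n + k, Nat.le_add_left k n, by rwa [dist_comm] at hd⟩
    choose φ hφ1 hφ2 using hsel
    refine ⟨φ, tendsto_atTop_mono hφ1 tendsto_id, ?_⟩
    rw [Metric.tendsto_atTop]
    intro ε hε
    obtain ⟨K, hK⟩ := exists_nat_one_div_lt hε
    refine ⟨K, fun k hk => ?_⟩
    calc dist (f^[φ k] x) y < 1 / (k + 1) := hφ2 k
      _ ≤ 1 / (K + 1) := by
          apply one_div_le_one_div_of_le (by positivity)
          have : (K : ℝ) ≤ k := Nat.cast_le.2 hk
          linarith
      _ < ε := hK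
  -- (c) proximality
  have hprox : ∀ ε : ℝ, 0 < ε → ∀ N : ℕ, ∃ n, N ≤ n ∧ dist (f^[n] x) (f^[n] y) < ε := by
    intro ε hε N
    have hcont : Continuous fun g : X → X => (g x, g y) :=
      (continuous_apply x).prodMk (continuous_apply y)
    have h1 : ((y, u y) : X × X) ∈
        closure (Set.range fun n : ℕ => ((f^[n + N] x, f^[n + N] y) : X × X)) := by
      refine map_mem_closure (f := fun g : X → X => ((g x, g y) : X × X)) hcont (huE N) ?_
      rintro _ ⟨n, rfl⟩
      exact ⟨n, rfl⟩
    rw [huy] at h1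
    obtain ⟨b, ⟨n, rfl⟩, hd⟩ := Metric.mem_closure_iff.1 h1 _ (half_pos hε)
    rw [Prod.dist_eq] at hd
    obtain ⟨hd1, hd2⟩ := max_lt_iff.1 hd
    refine ⟨n + N, Nat.le_add_left N n, ?_⟩
    calc dist (f^[n + N] x) (f^[n + N] y)
        ≤ dist (f^[n + N] x) y + dist y (f^[n + N] y) := dist_triangle _ _ _
      _ < ε / 2 + ε / 2 := add_lt_add (by rw [dist_comm]; exact hd1) hd2
      _ = ε := add_halves ε
  -- liminf = 0
  have hliminf : Filter.liminf (fun n : ℕ => dist (f^[n] x) (f^[n] y)) atTop = 0 := by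
    have hb1 : IsBoundedUnder (· ≥ ·) atTop (fun n : ℕ => dist (f^[n] x) (f^[n] y)) :=
      isBoundedUnder_of ⟨0, fun n => dist_nonneg⟩
    have hb2 : IsBoundedUnder (· ≤ ·) atTop (fun n : ℕ => dist (f^[n] x) (f^[n] y)) := by
      refine isBoundedUnder_of ⟨Metric.diam (Set.univ : Set X), fun n => ?_⟩
      exact Metric.dist_le_diam_of_mem isCompact_univ.isBounded (Set.mem_univ _) (Set.mem_univ _)
    refine le_antisymm ?_ (le_liminf_of_le hb2.isCoboundedUnder_ge
      (Eventually.of_forall fun n => dist_nonneg))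
    by_contra hlt
    push_neg at hlt
    set l := Filter.liminf (fun n : ℕ => dist (f^[n] x) (f^[n] y)) atTop with hl
    have hfreq : ∃ᶠ n in atTop, dist (f^[n] x) (f^[n] y) ≤ l / 2 := by
      rw [frequently_atTop]
      intro N
      obtain ⟨n, hn1, hn2⟩ := hprox (l / 2) (by linarith) N
      exact ⟨n, hn1, hn2.le⟩
    have := liminf_le_of_frequently_le hfreq hb1
    rw [← hl] at this
    linarith
  -- (d) minimality of the orbit closure of y
  have hEcpt : IsCompact (AEP.EE f 0) := (AEP.isClosed_EE f 0).isCompact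
  have hMsub : closure (Set.range fun n : ℕ => f^[n] y) ⊆
      (fun g : X → X => g y) '' AEP.EE f 0 := by
    have himcl : IsClosed ((fun g : X → X => g y) '' AEP.EE f 0) :=
      (hEcpt.image (continuous_apply y)).isClosed
    apply closure_minimal _ himcl
    rintro _ ⟨n, rfl⟩
    exact ⟨f^[n], AEP.self_mem_EE f 0 (Nat.zero_le n), rfl⟩
  have hMmin : IsMinimalSet f (closure (Set.range fun n : ℕ => f^[n] y)) := by
    refine ⟨⟨y, subset_closure ⟨0, rfl⟩⟩, isClosed_closure, ?_, ?_⟩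
    · rintro _ ⟨w, hw, rfl⟩
      obtain ⟨g, hg, rfl⟩ := hMsub hw
      have : f ∘ g ∈ AEP.EE f 0 := by
        have := AEP.comp_mem_EE hf hfE hg
        simpa using this
      exact horbit y (f ∘ g) this
    · intro T hTsub hTne hTcl hTinv
      obtain ⟨z, hz⟩ := hTne
      have horbT : ∀ n : ℕ, f^[n] z ∈ T := by
        intro n
        induction n with
        | zero => exact hz
        | succ n ih =>
          rw [Function.iterate_succ_apply']
          exact hTinv ⟨_, ih, rfl⟩
      have hclT : closure (Set.range fun n : ℕ => f^[n] z) ⊆ T := by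
        apply closure_minimal _ hTcl
        rintro _ ⟨n, rfl⟩
        exact horbT n
      obtain ⟨g, hg, hgz⟩ := hMsub (hTsub hz)
      -- z = g y = (g ∘ u) y with g ∘ u ∈ L
      have hguL : g ∘ u ∈ L := hLid g hg u huL
      have hzeq : (g ∘ u) y = z := by
        show g (u y) = z
        rw [huy]; exact hgz
      -- the left ideal (· ∘ (g ∘ u)) '' EE f 0 equals L by minimality
      set l : X → X := g ∘ u with hldef
      have hL' : ((fun g' : X → X => g' ∘ l) '' AEP.EE f 0) = L := by
        apply hLmin
        · refine ⟨⟨l, ⟨id, ?_, ?_⟩⟩, (hEcpt.image (AEP.contR l)).isClosed, ?_, ?_⟩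
          · exact Function.iterate_zero f ▸ AEP.self_mem_EE f 0 le_rfl
          · rfl
          · rintro _ ⟨g', hg', rfl⟩
            exact hLsub (hLid g' hg' l hguL)
          · rintro g1 hg1 _ ⟨g2, hg2, rfl⟩
            have : g1 ∘ g2 ∈ AEP.EE f 0 := by
              have := AEP.comp_mem_EE hf hg1 hg2
              simpa using this
            exact ⟨g1 ∘ g2, this, rfl⟩
        · rintro _ ⟨g', hg', rfl⟩
          exact hLid g' hg' l hguL
      -- every point of M lies in T
      refine Set.Subset.antisymm hTsub ?_
      intro w hw
      obtain ⟨g2, hg2, rfl⟩ := hMsub hw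
      have hg2uL : g2 ∘ u ∈ L := hLid g2 hg2 u huL
      rw [← hL'] at hg2uL
      obtain ⟨g3, hg3, hg3eq⟩ := hg2uL
      have : g2 y = g3 z := by
        have h1 : g2 y = (g2 ∘ u) y := by show g2 y = g2 (u y); rw [huy]
        rw [h1, ← hg3eq]
        show (g3 ∘ l) y = g3 z
        show g3 (l y) = g3 z
        rw [hzeq]
      show g2 y ∈ T
      rw [this]
      exact hclT (horbit z g3 hg3)
  exact ⟨y, hyomega, hMmin, hliminf⟩
end
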